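/- Let G be a subgroup of the symmetric group S₄ on {1,2,3,4} that acts transitively on {1,2,3,4} and is generated by a set of 3-cycles. Then G is equal to the alternating group A₄. -/
import Mathlib

theorem stmt8 (G : Subgroup (Equiv.Perm (Fin 4)))
    (htrans : ∀ x y : Fin 4, ∃ g ∈ G, g x = y)
    (hgen : ∃ S : Set (Equiv.Perm (Fin 4)),
      (∀ g ∈ S, Equiv.Perm.IsThreeCycle g) ∧ G = Subgroup.closure S) :
    G = alternatingGroup (Fin 4) := by
  obtain ⟨S, hS3, hGS⟩ := hgen
  -- G ≤ A4
  have hle : G ≤ alternatingGroup (Fin 4) := by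
    rw [hGS]
    exact Subgroup.closure_le _ |>.mpr fun g hg => (hS3 g hg).mem_alternatingGroup
  -- S nonempty
  have hSne : S.Nonempty := by
    by_contra h
    rw [Set.not_nonempty_iff_eq_empty] at h
    subst h
    rw [Subgroup.closure_empty] at hGS
    obtain ⟨g, hg, hg01⟩ := htrans 0 1
    rw [hGS, Subgroup.mem_bot] at hg
    subst hg
    simp at hg01
  -- 3 ∣ card G
  obtain ⟨g, hgS⟩ := hSne
  have hgG : g ∈ G := by rw [hGS]; exact Subgroup.subset_closure hgS
  have h3 : 3 ∣ Nat.card G := by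
    have : orderOf (⟨g, hgG⟩ : G) = 3 := by
      rw [Subgroup.orderOf_mk]
      exact (hS3 g hgS).orderOf
    rw [← this]
    exact orderOf_dvd_natCard _
  -- 4 ∣ card G via orbit-stabilizer
  have horb : MulAction.orbit G (0 : Fin 4) = Set.univ := by
    ext x
    simp only [Set.mem_univ, iff_true]
    obtain ⟨p, hp, hpx⟩ := htrans 0 x
    exact ⟨⟨p, hp⟩, hpx⟩
  have h4 : 4 ∣ Nat.card G := by
    haveI : Fintype G := Fintype.ofFinite G
    haveI : Fintype (MulAction.orbit G (0 : Fin 4)) := Fintype.ofFinite _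
    have := MulAction.card_orbit_mul_card_stabilizer_eq_card_group G (0 : Fin 4)
    simp only [← Nat.card_eq_fintype_card] at this
    have hcard : Nat.card (MulAction.orbit G (0 : Fin 4)) = 4 := by
      rw [horb, Nat.card_eq_fintype_card]; decide
    rw [hcard] at this
    exact ⟨_, this.symm⟩
  have h12 : 12 ∣ Nat.card G := Nat.Coprime.mul_dvd_of_dvd_of_dvd (by norm_num) h4 h3
  have hA : Nat.card (alternatingGroup (Fin 4)) = 12 := by
    rw [Nat.card_eq_fintype_card]; decide
  exact (Subgroup.eq_of_le_of_card_ge hle (by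
    rw [hA]; exact Nat.le_of_dvd Nat.card_pos h12)).symm ▸ rfl
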